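/- Let K be a field and B a commutative K-algebra that is finite-dimensional as a K-vector space with nondegenerate trace form over K. Then B is an étale K-algebra (formally étale and of finite presentation over K). -/

import Mathlib

universe u

open Module Polynomial IntermediateField

/-- The trace of a finite product of finite-dimensional algebras is the sum of the traces. -/
lemma trace_pi' {K : Type u} [Field K] {ι : Type u} [Fintype ι] (A : ι → Type u)
    [∀ i, CommRing (A i)] [∀ i, Algebra K (A i)] [∀ i, FiniteDimensional K (A i)]
    (x : Π i, A i) :
    Algebra.trace K (Π i, A i) x = ∑ i, Algebra.trace K (A i) (x i) := by
  classical
  let b : ∀ i, Basis (Fin (finrank K (A i))) K (A i) := fun i => Module.finBasis K (A i)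
  let Bb : Basis (Σ i, Fin (finrank K (A i))) K (Π i, A i) := Pi.basis b
  rw [Algebra.trace_eq_matrix_trace Bb, Matrix.trace]
  rw [← Finset.univ_sigma_univ, Finset.sum_sigma]
  refine Finset.sum_congr rfl fun i _ => ?_
  rw [Algebra.trace_eq_matrix_trace (b i), Matrix.trace]
  refine Finset.sum_congr rfl fun j _ => ?_
  simp only [Matrix.diag_apply, Algebra.leftMulMatrix_eq_repr_mul]
  rw [show (Bb ⟨i, j⟩ : Π k, A k) = Pi.single i (b i j) from ?_]
  · rw [Pi.basis_repr]
    congr 1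
    simp [Pi.mul_apply, Pi.single_eq_same]
  · ext k
    by_cases hk : k = i
    · subst hk; simp [Bb, Pi.basis_apply]
    · simp [Bb, Pi.basis_apply, hk, Pi.single_eq_of_ne hk]

/-- A nontrivial purely inseparable finite extension has vanishing trace map. -/
lemma trace_zero_of_pins {F E : Type u} [Field F] [Field E] [Algebra F E]
    [FiniteDimensional F E] [IsPurelyInseparable F E]
    (hne : ∃ z : E, z ∉ (algebraMap F E).range) :
    Algebra.trace F E = 0 := by
  classical
  obtain ⟨z, hz⟩ := hne
  set q := ringExpChar F with hqdef
  haveI hq : ExpChar F q := ringExpChar.expChar F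
  obtain ⟨n, y, hmin⟩ := IsPurelyInseparable.minpoly_eq_X_pow_sub_C F q z
  have hzint : IsIntegral F z := IsIntegral.of_finite F z
  have h2 : 2 ≤ (minpoly F z).natDegree := (minpoly.two_le_natDegree_iff hzint).mpr hz
  have hdeg : (minpoly F z).natDegree = q ^ n := by
    rw [hmin, natDegree_X_pow_sub_C]
  clear_value q
  have hqprime : q.Prime := by
    rcases expChar_is_prime_or_one F q with hp | h1
    · exact hp
    · exfalso; rw [hdeg, h1, one_pow] at h2; omega
  haveI : CharP F q := by
    rcases hq with _ | hp
    · exact absurd rfl hqprime.ne_one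
    · assumption
  have hdvd : q ∣ finrank F E := by
    refine dvd_trans ?_ (hdeg ▸ minpoly.degree_dvd hzint)
    refine dvd_pow_self q ?_
    rintro rfl
    rw [hdeg, pow_zero] at h2; omega
  ext x
  show Algebra.trace F E x = 0
  by_cases hx : x ∈ (algebraMap F E).range
  · obtain ⟨y', rfl⟩ := hx
    rw [Algebra.trace_algebraMap, nsmul_eq_mul, (CharP.cast_eq_zero_iff F q _).mpr hdvd, zero_mul]
  · rw [trace_eq_trace_adjoin F x]
    have hxint : IsIntegral F x := IsIntegral.of_finite F x
    have h2x : 2 ≤ (minpoly F x).natDegree := (minpoly.two_le_natDegree_iff hxint).mpr hx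
    obtain ⟨m, y₂, hminx⟩ := IsPurelyInseparable.minpoly_eq_X_pow_sub_C F q x
    have htr : Algebra.trace F F⟮x⟯ (AdjoinSimple.gen F x) = 0 := by
      rw [← IntermediateField.adjoin.powerBasis_gen hxint,
        PowerBasis.trace_gen_eq_nextCoeff_minpoly,
        IntermediateField.adjoin.powerBasis_gen hxint, IntermediateField.minpoly_gen F x, hminx]
      have hd : (X ^ q ^ m - C y₂ : F[X]).natDegree = q ^ m := natDegree_X_pow_sub_C
      have h2' : 2 ≤ q ^ m := by rw [← hd, ← hminx]; exact h2x
      rw [nextCoeff_of_natDegree_pos (by omega : 0 < (X ^ q ^ m - C y₂ : F[X]).natDegree), hd]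
      rw [coeff_sub, coeff_X_pow, coeff_C, if_neg (by omega), if_neg (by omega)]
      simp
    rw [htr, smul_zero]

set_option synthInstance.maxHeartbeats 1000000 in
set_option maxHeartbeats 1000000 in
/-- A finite field extension with nondegenerate trace form is separable. -/
lemma isSeparable_of_nondeg' {K L : Type u} [Field K] [Field L] [Algebra K L]
    [FiniteDimensional K L] (h : (Algebra.traceForm K L).Nondegenerate) :
    Algebra.IsSeparable K L := by
  by_contra hsep
  set S := separableClosure K L with hS
  haveI : Algebra.IsAlgebraic K L := Algebra.IsAlgebraic.of_finite K L
  haveI : IsPurelyInseparable S L := separableClosure.isPurelyInseparable K L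
  haveI : FiniteDimensional S L := FiniteDimensional.right K S L
  have hne : ∃ z : L, z ∉ (algebraMap S L).range := by
    by_contra hall
    push_neg at hall
    refine hsep ((separableClosure.eq_top_iff K L).mp ?_)
    rw [← hS]
    ext z
    simp only [IntermediateField.mem_top, iff_true]
    obtain ⟨y, rfl⟩ := hall z
    exact y.2
  have h0 : Algebra.trace S L = 0 := trace_zero_of_pins hne
  have : (1 : L) = 0 := by
    apply h.1
    intro y
    rw [Algebra.traceForm_apply, one_mul, ← Algebra.trace_trace (S := S), h0,
      LinearMap.zero_apply, map_zero]
  exact one_ne_zero this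

/-- A finite-dimensional commutative algebra over a field with nondegenerate trace
form is an étale algebra (formally étale and of finite presentation). -/
theorem stmt12 {K B : Type u} [Field K] [CommRing B] [Algebra K B]
    [FiniteDimensional K B]
    (h : (Algebra.traceForm K B).Nondegenerate) : Algebra.Etale K B := by
  classical
  -- B is reduced
  haveI hred : IsReduced B := by
    rw [isReduced_iff]
    intro x hx
    refine h.1 x fun y => ?_
    rw [Algebra.traceForm_apply, Algebra.trace_apply]
    have hnil : IsNilpotent (x * y) := (Commute.all x y).isNilpotent_mul_right hx
    have hnil' : IsNilpotent (Algebra.lmul K B (x * y)) := hnil.map (Algebra.lmul K B)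
    have := LinearMap.isNilpotent_trace_of_isNilpotent hnil'
    exact this.eq_zero
  haveI : IsArtinianRing B := isArtinian_of_tower K inferInstance
  haveI : Finite {I : Ideal B | I.IsMaximal} := (IsArtinianRing.setOfPred_isMaximal_finite B).to_subtype
  haveI : Fintype {I : Ideal B | I.IsMaximal} := Fintype.ofFinite _
  set ι := {I : Ideal B | I.IsMaximal} with hι
  letI instF : ∀ I : ι, Field (B ⧸ I.1) := fun I => @Ideal.Quotient.field B _ I.1 I.2
  -- the algebra equivalence with the product of residue fields
  let e : B ≃+* Π I : ι, B ⧸ I.1 :=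
    RingEquiv.ofBijective (Pi.ringHom fun I : ι => Ideal.Quotient.mk I.1) (by
      constructor
      · intro x y hxy
        apply (IsArtinianRing.equivPi B).injective
        funext m
        exact congrFun hxy ⟨m.asIdeal, m.isMaximal⟩
      · intro f
        refine ⟨(IsArtinianRing.equivPi B).symm (fun m => f ⟨m.asIdeal, m.isMaximal⟩), ?_⟩
        funext I
        exact congrFun ((IsArtinianRing.equivPi B).apply_symm_apply
          (fun m => f ⟨m.asIdeal, m.isMaximal⟩)) ⟨I.1, I.2⟩)
  let e' : B ≃ₐ[K] Π I : ι, B ⧸ I.1 :=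
    { e with commutes' := fun k => rfl }
  haveI : ∀ I : ι, FiniteDimensional K (B ⧸ I.1) := fun I =>
    Module.Finite.of_surjective (Ideal.Quotient.mkₐ K I.1).toLinearMap
      Ideal.Quotient.mk_surjective
  -- each factor is separable
  haveI hsep : ∀ I : ι, Algebra.IsSeparable K (B ⧸ I.1) := by
    intro I
    refine isSeparable_of_nondeg'
      (LinearMap.IsRefl.nondegenerate_iff_separatingLeft
        ((Algebra.traceForm_isSymm K).isRefl : LinearMap.IsRefl (Algebra.traceForm K (B ⧸ I.1)))
        |>.mpr ?_)
    intro z hz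
    have hx : e'.symm (Pi.single I z) = 0 := by
      refine h.1 _ fun y => ?_
      rw [Algebra.traceForm_apply, ← Algebra.trace_eq_of_algEquiv e', map_mul,
        AlgEquiv.apply_symm_apply, trace_pi']
      have hmul : (Pi.single I z * e' y : Π J : ι, B ⧸ J.1) = Pi.single I (z * e' y I) := by
        ext J
        by_cases hJ : J = I
        · subst hJ; simp [Pi.single_eq_same]
        · simp [Pi.single_eq_of_ne hJ]
      rw [hmul]
      rw [Finset.sum_eq_single_of_mem I (Finset.mem_univ I)]
      · rw [Pi.single_eq_same]
        exact hz (e' y I)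
      · intro J _ hJ
        rw [Pi.single_eq_of_ne hJ, map_zero]
    have : (Pi.single I z : Π J : ι, B ⧸ J.1) = 0 := by
      have := congrArg e' hx
      rwa [AlgEquiv.apply_symm_apply, map_zero] at this
    have := congrFun this I
    rwa [Pi.single_eq_same] at this
  haveI : ∀ I : ι, Algebra.FormallyEtale K (B ⧸ I.1) := fun I =>
    Algebra.FormallyEtale.of_isSeparable K (B ⧸ I.1)
  haveI : Algebra.FormallyEtale K (Π I : ι, B ⧸ I.1) := by
    rw [Algebra.FormallyEtale.iff_formallyUnramified_and_formallySmooth]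
    constructor
    · rw [Algebra.FormallyUnramified.pi_iff]
      intro I; infer_instance
    · rw [Algebra.FormallySmooth.pi_iff]
      intro I; infer_instance
  haveI : Algebra.FormallyEtale K B := Algebra.FormallyEtale.of_equiv e'.symm
  exact { formallyEtale := inferInstance,
          finitePresentation :=
            Algebra.FinitePresentation.of_finiteType.mp (inferInstance : Algebra.FiniteType K B) }
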